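/- Let (X_n) be a Markov chain on Ω, K ⊆ Ω measurable, τ = inf{n ≥ 1 : X_n ∈ K}, and suppose Σ_{n≥1} sup_{x∈K} P_x(τ ≥ n) < ∞. Then for every α > 0 there exists l ≥ 0 such that for all x ∈ K and all n ≥ l, P_x(∃ i ∈ {n−l, ..., n} : X_i ∈ K) > 1 − α. -/

import Mathlib

open MeasureTheory Set Filter Topology
open scoped ENNReal

/-- Markov chain family: see the paper, Section 2. -/
def IsMarkovChainFamily {Ω : Type*} [MeasurableSpace Ω] (P : Ω → Measure (ℕ → Ω)) : Prop :=
  (∀ x, IsProbabilityMeasure (P x)) ∧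
  (∀ x, P x {ω | ω 0 = x} = 1) ∧
  (∀ (x : Ω) (n : ℕ) (B : Set (ℕ → Ω)), MeasurableSet B →
    ∀ C : Set (ℕ → Ω), MeasurableSet C →
      (∀ ω ω' : ℕ → Ω, (∀ k ≤ n, ω k = ω' k) → (ω ∈ C ↔ ω' ∈ C)) →
      P x (C ∩ {ω | (fun k => ω (n + k)) ∈ B}) = ∫⁻ ω in C, P (ω n) B ∂ P x)

private lemma measAux8 {Ω : Type*} [MeasurableSpace Ω] {K : Set Ω} (hK : MeasurableSet K)
    (p q : ℕ → Prop) : MeasurableSet {ω : ℕ → Ω | ∀ k, p k → q k → ω k ∉ K} := by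
  have h : {ω : ℕ → Ω | ∀ k, p k → q k → ω k ∉ K}
      = ⋂ (k : ℕ) (_ : p k) (_ : q k), (fun ω : ℕ → Ω => ω k) ⁻¹' Kᶜ := by
    ext ω; simp [Set.mem_iInter]
  rw [h]
  exact MeasurableSet.iInter fun k => MeasurableSet.iInter fun _ =>
    MeasurableSet.iInter fun _ => (measurable_pi_apply k) hK.compl

/-- Renewal estimate: if the return-time tails to `K` are uniformly summable over `K`,
then for every `α > 0` there is `l` such that for all `x ∈ K` and `n ≥ l`,
`P_x(∃ i ∈ {n−l,…,n}, X_i ∈ K) > 1 − α`. -/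
theorem stmt8 {Ω : Type*} [MeasurableSpace Ω] (P : Ω → Measure (ℕ → Ω))
    (hP : IsMarkovChainFamily P) (K : Set Ω) (hK : MeasurableSet K)
    (hsum : (∑' n : ℕ, ⨆ x ∈ K, P x {ω | ∀ k, 1 ≤ k → k < n → ω k ∉ K}) < ⊤) :
    ∀ α : ℝ, 0 < α → ∃ l : ℕ, ∀ x ∈ K, ∀ n, l ≤ n →
      1 - ENNReal.ofReal α < P x {ω | ∃ i, n - l ≤ i ∧ i ≤ n ∧ ω i ∈ K} := by
  intro α hα
  classical
  set T : ℕ → ℝ≥0∞ := fun q => ⨆ x ∈ K, P x {ω | ∀ k, 1 ≤ k → k < q → ω k ∉ K} with hTdef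
  have htail : Tendsto (fun j => ∑' k, T (k + j)) atTop (𝓝 0) :=
    ENNReal.tendsto_sum_nat_add T hsum.ne
  have hmin : 0 < min α 1 := lt_min hα one_pos
  set c : ℝ≥0∞ := ENNReal.ofReal (min α 1) / 2 with hcdef
  have hc0 : 0 < c :=
    ENNReal.div_pos (ENNReal.ofReal_pos.mpr hmin).ne' ENNReal.ofNat_ne_top
  obtain ⟨i, hi⟩ := Filter.eventually_atTop.mp (htail.eventually_lt_const hc0)
  refine ⟨i, fun x hx n hn => ?_⟩
  haveI := hP.1 x
  set m : ℕ := n - i with hm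
  have hmn : m + i = n := Nat.sub_add_cancel hn
  set g : ℕ → ℝ≥0∞ := fun k => T (k + (i + 1)) with hgdef
  have hgt : (∑' k, g k) < c := hi (i + 1) (Nat.le_succ i)
  -- bound on each "last visit at time j" event
  have hBj : ∀ j, j < m →
      P x {ω : ℕ → Ω | ω j ∈ K ∧ ∀ t, j < t → t ≤ n → ω t ∉ K} ≤ g (m - j) := by
    intro j hj
    have hjn : j ≤ n := by omega
    set B' : Set (ℕ → Ω) := {ω | ∀ k, 1 ≤ k → k < (n - j) + 1 → ω k ∉ K} with hB'
    have hB'meas : MeasurableSet B' := measAux8 hK _ _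
    set C : Set (ℕ → Ω) := (fun ω : ℕ → Ω => ω j) ⁻¹' K with hC
    have hCmeas : MeasurableSet C := (measurable_pi_apply j) hK
    have hCdep : ∀ ω ω' : ℕ → Ω, (∀ k ≤ j, ω k = ω' k) → (ω ∈ C ↔ ω' ∈ C) := by
      intro ω ω' h
      simp only [hC, Set.mem_preimage, h j le_rfl]
    have hset : {ω : ℕ → Ω | ω j ∈ K ∧ ∀ t, j < t → t ≤ n → ω t ∉ K}
        = C ∩ {ω | (fun k => ω (j + k)) ∈ B'} := by
      ext ω
      simp only [Set.mem_setOf_eq, Set.mem_inter_iff, Set.mem_preimage, hC, hB']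
      constructor
      · rintro ⟨h1, h2⟩
        exact ⟨h1, fun k hk1 hk2 => h2 (j + k) (by omega) (by omega)⟩
      · rintro ⟨h1, h2⟩
        refine ⟨h1, fun t ht1 ht2 => ?_⟩
        have h3 := h2 (t - j) (by omega) (by omega)
        rwa [show j + (t - j) = t by omega] at h3
    rw [hset, hP.2.2 x j B' hB'meas C hCmeas hCdep]
    calc ∫⁻ ω in C, P (ω j) B' ∂ P x
        ≤ ∫⁻ _ in C, T ((n - j) + 1) ∂ P x := by
          refine setLIntegral_mono measurable_const (fun ω hω => ?_)
          exact le_biSup (fun y => P y B') hω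
      _ = T ((n - j) + 1) * P x C := setLIntegral_const _ _
      _ ≤ T ((n - j) + 1) * 1 := mul_le_mul_right prob_le_one _
      _ = g (m - j) := by
          rw [mul_one, show (n - j) + 1 = (m - j) + (i + 1) by omega]
  -- bound on "no visit at all up to n"
  have hD : P x {ω : ℕ → Ω | ∀ t, t ≤ n → ω t ∉ K} ≤ g m := by
    have h1 : {ω : ℕ → Ω | ∀ t, t ≤ n → ω t ∉ K}
        ⊆ {ω : ℕ → Ω | ∀ k, 1 ≤ k → k < n + 1 → ω k ∉ K} :=
      fun ω h k _ hk2 => h k (by omega)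
    calc P x {ω : ℕ → Ω | ∀ t, t ≤ n → ω t ∉ K}
        ≤ P x {ω : ℕ → Ω | ∀ k, 1 ≤ k → k < n + 1 → ω k ∉ K} := measure_mono h1
      _ ≤ T (n + 1) := le_biSup (fun y => P y _) hx
      _ = g m := by rw [show n + 1 = m + (i + 1) by omega]
  set A : Set (ℕ → Ω) := {ω | ∀ t, n - i ≤ t → t ≤ n → ω t ∉ K} with hA
  have hAmeas : MeasurableSet A := measAux8 hK _ _
  have hScompl : {ω : ℕ → Ω | ∃ i_1, n - i ≤ i_1 ∧ i_1 ≤ n ∧ ω i_1 ∈ K} = Aᶜ := by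
    ext ω
    constructor
    · rintro ⟨t, h1, h2, h3⟩ hcon
      exact hcon t h1 h2 h3
    · intro h
      by_contra hno
      apply h
      intro t h1 h2 h3
      exact hno ⟨t, h1, h2, h3⟩
  have hcover : A ⊆ {ω : ℕ → Ω | ∀ t, t ≤ n → ω t ∉ K} ∪
      ⋃ j ∈ Finset.range m, {ω : ℕ → Ω | ω j ∈ K ∧ ∀ t, j < t → t ≤ n → ω t ∉ K} := by
    intro ω hω
    by_cases hvisit : ∀ t, t ≤ n → ω t ∉ K
    · exact Or.inl hvisit
    · push_neg at hvisit
      obtain ⟨t, ht, htK⟩ := hvisit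
      right
      set j := Nat.findGreatest (fun s => ω s ∈ K) n with hj
      have hjK : ω j ∈ K := Nat.findGreatest_spec (P := fun s => ω s ∈ K) ht htK
      have hjle : j ≤ n := Nat.findGreatest_le n
      have hjm : j < m := by
        by_contra hge
        exact hω j (by omega) hjle hjK
      refine Set.mem_biUnion (Finset.mem_range.mpr hjm) ⟨hjK, fun t' h1 h2 => ?_⟩
      exact Nat.findGreatest_is_greatest h1 h2
  have hPA : P x A ≤ g m + ∑ j ∈ Finset.range m, g (m - j) := by
    calc P x A
        ≤ P x ({ω : ℕ → Ω | ∀ t, t ≤ n → ω t ∉ K} ∪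
            ⋃ j ∈ Finset.range m, {ω : ℕ → Ω | ω j ∈ K ∧ ∀ t, j < t → t ≤ n → ω t ∉ K}) :=
          measure_mono hcover
      _ ≤ P x {ω : ℕ → Ω | ∀ t, t ≤ n → ω t ∉ K} +
            P x (⋃ j ∈ Finset.range m,
              {ω : ℕ → Ω | ω j ∈ K ∧ ∀ t, j < t → t ≤ n → ω t ∉ K}) := measure_union_le _ _
      _ ≤ g m + ∑ j ∈ Finset.range m,
            P x {ω : ℕ → Ω | ω j ∈ K ∧ ∀ t, j < t → t ≤ n → ω t ∉ K} :=
          add_le_add hD (measure_biUnion_finset_le _ _)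
      _ ≤ g m + ∑ j ∈ Finset.range m, g (m - j) :=
          add_le_add_right (Finset.sum_le_sum fun j hj => hBj j (Finset.mem_range.mp hj)) _
  have hsum_le : ∑ j ∈ Finset.range m, g (m - j) ≤ ∑' k, g k := by
    calc ∑ j ∈ Finset.range m, g (m - j)
        ≤ ∑ j ∈ Finset.range (m + 1), g (m - j) :=
          Finset.sum_le_sum_of_subset (Finset.range_subset_range.mpr (Nat.le_succ m))
      _ = ∑ j ∈ Finset.range (m + 1), g j := by
          simpa using Finset.sum_range_reflect g (m + 1)
      _ ≤ ∑' k, g k := ENNReal.sum_le_tsum _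
  have hPA2 : P x A < ENNReal.ofReal (min α 1) := by
    calc P x A ≤ g m + ∑ j ∈ Finset.range m, g (m - j) := hPA
      _ ≤ (∑' k, g k) + (∑' k, g k) := add_le_add (ENNReal.le_tsum m) hsum_le
      _ < c + c := ENNReal.add_lt_add hgt hgt
      _ = ENNReal.ofReal (min α 1) := ENNReal.add_halves _
  have hPS : P x {ω : ℕ → Ω | ∃ i_1, n - i ≤ i_1 ∧ i_1 ≤ n ∧ ω i_1 ∈ K} = 1 - P x A := by
    rw [hScompl, prob_compl_eq_one_sub hAmeas]
  rw [hPS]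
  have h1 : P x A < 1 :=
    lt_of_lt_of_le hPA2 (ENNReal.ofReal_le_one.mpr (min_le_right α 1))
  have h2 : P x A < ENNReal.ofReal α :=
    lt_of_lt_of_le hPA2 (ENNReal.ofReal_le_ofReal (min_le_left α 1))
  rcases le_or_gt 1 (ENNReal.ofReal α) with hcase | hcase
  · rw [tsub_eq_zero_of_le hcase]
    exact tsub_pos_of_lt h1
  · exact ((ENNReal.cancel_of_ne ENNReal.one_ne_top).tsub_lt_tsub_iff_left_of_le
      (ENNReal.cancel_of_ne ENNReal.ofReal_ne_top) hcase.le).mpr h2
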